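/- The steady-state mean oxygen flux is strictly increasing in the total switching rate: if 0 < r₁ < r₂, if (v₀, v₁) solves the insect-respiration BVP at rate r₁ and (w₀, w₁) solves it at rate r₂, then D·(v₀'(0) + v₁'(0)) < D·(w₀'(0) + w₁'(0)). -/

import Mathlib

open Set Real

/-- `t ↦ sinh t / (t cosh t)` is strictly decreasing on `(0, ∞)`. -/
lemma sinh_div_mul_cosh_strictAnti :
    StrictAntiOn (fun t : ℝ => Real.sinh t / (t * Real.cosh t)) (Set.Ioi 0) := by
  apply strictAntiOn_of_deriv_neg (convex_Ioi 0)
  · apply ContinuousOn.div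
    · exact Real.continuous_sinh.continuousOn
    · exact (continuous_id.mul Real.continuous_cosh).continuousOn
    · intro x hx
      exact (mul_pos hx (Real.cosh_pos x)).ne'
  · intro t ht
    rw [interior_Ioi] at ht
    have htpos : (0:ℝ) < t := ht
    have hden : t * Real.cosh t ≠ 0 := (mul_pos htpos (Real.cosh_pos t)).ne'
    have hder : HasDerivAt (fun t : ℝ => Real.sinh t / (t * Real.cosh t))
        ((Real.cosh t * (t * Real.cosh t)
          - Real.sinh t * (1 * Real.cosh t + t * Real.sinh t)) / (t * Real.cosh t) ^ 2) t :=
      (Real.hasDerivAt_sinh t).div ((hasDerivAt_id t).mul (Real.hasDerivAt_cosh t)) hden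
    rw [hder.deriv]
    apply div_neg_of_neg_of_pos
    · have h1 : t < Real.sinh t := Real.self_lt_sinh_iff.mpr htpos
      have h2 : (1:ℝ) ≤ Real.cosh t := Real.one_le_cosh t
      have h3 : Real.cosh t ^ 2 - Real.sinh t ^ 2 = 1 := Real.cosh_sq_sub_sinh_sq t
      nlinarith [Real.sinh_pos_iff.mpr htpos]
    · positivity

/-- The flux identity for a solution of the insect-respiration BVP at rate `r = D k²`. -/
lemma insect_flux_eq (L D c ρ r k : ℝ) (hL : 0 < L) (hD : 0 < D)
    (hρ : ρ ∈ Set.Ioo (0:ℝ) 1) (hk : 0 < k) (hkr : D * (k * k) = r)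
    (v₀ v₁ : ℝ → ℝ) (a b : ℝ) (ha : a < 0) (hb : L < b)
    (hreg0 : ContDiffOn ℝ 2 v₀ (Set.Ioo a b))
    (hreg1 : ContDiffOn ℝ 2 v₁ (Set.Ioo a b))
    (hode0 : ∀ x ∈ Set.Icc (0:ℝ) L,
      D * deriv (deriv v₀) x = (1 - ρ) * r * v₀ x - ρ * r * v₁ x)
    (hode1 : ∀ x ∈ Set.Icc (0:ℝ) L,
      D * deriv (deriv v₁) x = ρ * r * v₁ x - (1 - ρ) * r * v₀ x)
    (hbc0 : v₀ 0 = 0) (hbc1 : v₁ 0 = 0)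
    (hbc2 : deriv v₁ L = 0) (hbc3 : v₀ L = ρ * c) :
    (deriv v₀ 0 + deriv v₁ 0) *
        (ρ * L * (k * Real.cosh (k * L)) + (1 - ρ) * Real.sinh (k * L))
      = ρ * c * (k * Real.cosh (k * L)) := by
  obtain ⟨hρ0, hρ1⟩ := hρ
  have hIcc : Set.Icc (0:ℝ) L ⊆ Set.Ioo a b := fun x hx =>
    ⟨lt_of_lt_of_le ha hx.1, lt_of_le_of_lt hx.2 hb⟩
  have h0mem : (0:ℝ) ∈ Set.Icc (0:ℝ) L := ⟨le_refl 0, hL.le⟩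
  have hLmem : L ∈ Set.Icc (0:ℝ) L := ⟨hL.le, le_refl L⟩
  -- first derivatives
  have hv0d : ∀ x ∈ Set.Ioo a b, HasDerivAt v₀ (deriv v₀ x) x := fun x hx =>
    (((hreg0.differentiableOn two_ne_zero).differentiableAt
      (isOpen_Ioo.mem_nhds hx))).hasDerivAt
  have hv1d : ∀ x ∈ Set.Ioo a b, HasDerivAt v₁ (deriv v₁ x) x := fun x hx =>
    (((hreg1.differentiableOn two_ne_zero).differentiableAt
      (isOpen_Ioo.mem_nhds hx))).hasDerivAt
  -- second derivatives
  have hreg0' : ContDiffOn ℝ 1 (deriv v₀) (Set.Ioo a b) :=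
    hreg0.deriv_of_isOpen isOpen_Ioo (by norm_num)
  have hreg1' : ContDiffOn ℝ 1 (deriv v₁) (Set.Ioo a b) :=
    hreg1.deriv_of_isOpen isOpen_Ioo (by norm_num)
  have hv0d2 : ∀ x ∈ Set.Ioo a b, HasDerivAt (deriv v₀) (deriv (deriv v₀) x) x := fun x hx =>
    (((hreg0'.differentiableOn one_ne_zero).differentiableAt
      (isOpen_Ioo.mem_nhds hx))).hasDerivAt
  have hv1d2 : ∀ x ∈ Set.Ioo a b, HasDerivAt (deriv v₁) (deriv (deriv v₁) x) x := fun x hx =>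
    (((hreg1'.differentiableOn one_ne_zero).differentiableAt
      (isOpen_Ioo.mem_nhds hx))).hasDerivAt
  -- combined functions u = (1-ρ)v₀ - ρv₁ and s = v₀ + v₁
  have hud : ∀ x ∈ Set.Ioo a b,
      HasDerivAt (fun y => (1 - ρ) * v₀ y - ρ * v₁ y)
        ((1 - ρ) * deriv v₀ x - ρ * deriv v₁ x) x := fun x hx =>
    ((hv0d x hx).const_mul (1 - ρ)).sub ((hv1d x hx).const_mul ρ)
  have hu'd : ∀ x ∈ Set.Icc (0:ℝ) L,
      HasDerivAt (fun y => (1 - ρ) * deriv v₀ y - ρ * deriv v₁ y)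
        (k * k * ((1 - ρ) * v₀ x - ρ * v₁ x)) x := by
    intro x hx
    have h := ((hv0d2 x (hIcc hx)).const_mul (1 - ρ)).sub ((hv1d2 x (hIcc hx)).const_mul ρ)
    have hval : (1 - ρ) * deriv (deriv v₀) x - ρ * deriv (deriv v₁) x
        = k * k * ((1 - ρ) * v₀ x - ρ * v₁ x) := by
      have e0 := hode0 x hx
      have e1 := hode1 x hx
      have hD' : D ≠ 0 := hD.ne'
      apply mul_left_cancel₀ hD'
      linear_combination (1 - ρ) * e0 - ρ * e1 - ((1 - ρ) * v₀ x - ρ * v₁ x) * hkr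
    rw [hval] at h
    exact h
  have hsd : ∀ x ∈ Set.Ioo a b,
      HasDerivAt (fun y => v₀ y + v₁ y) (deriv v₀ x + deriv v₁ x) x := fun x hx =>
    (hv0d x hx).add (hv1d x hx)
  have hs'd : ∀ x ∈ Set.Icc (0:ℝ) L,
      HasDerivAt (fun y => deriv v₀ y + deriv v₁ y) 0 x := by
    intro x hx
    have h := (hv0d2 x (hIcc hx)).add (hv1d2 x (hIcc hx))
    have hval : deriv (deriv v₀) x + deriv (deriv v₁) x = 0 := by
      have e0 := hode0 x hx
      have e1 := hode1 x hx
      have hD' : D ≠ 0 := hD.ne'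
      apply mul_left_cancel₀ hD'
      linear_combination e0 + e1
    rw [hval] at h
    exact h
  -- s' is constant on [0, L]
  have hs'const : ∀ x ∈ Set.Icc (0:ℝ) L,
      deriv v₀ x + deriv v₁ x = deriv v₀ 0 + deriv v₁ 0 := by
    have hcont : ContinuousOn (fun y => deriv v₀ y + deriv v₁ y) (Set.Icc (0:ℝ) L) :=
      fun x hx => ((hs'd x hx).differentiableAt.continuousAt).continuousWithinAt
    have := constant_of_has_deriv_right_zero hcont
      (fun x hx => (hs'd x (Set.Ico_subset_Icc_self hx)).hasDerivWithinAt)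
    simpa using this
  set m := deriv v₀ 0 + deriv v₁ 0 with hm
  -- s is linear: v₀ x + v₁ x = m * x on [0, L]
  have hslin : ∀ x ∈ Set.Icc (0:ℝ) L, v₀ x + v₁ x = m * x := by
    have hder : ∀ x ∈ Set.Icc (0:ℝ) L,
        HasDerivAt (fun y => v₀ y + v₁ y - m * y) 0 x := by
      intro x hx
      have h := (hsd x (hIcc hx)).sub ((hasDerivAt_id x).const_mul m)
      have hval : deriv v₀ x + deriv v₁ x - m * 1 = 0 := by
        have := hs'const x hx
        linarith
      rw [hval] at h
      exact h
    have hcont : ContinuousOn (fun y => v₀ y + v₁ y - m * y) (Set.Icc (0:ℝ) L) :=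
      fun x hx => ((hder x hx).differentiableAt.continuousAt).continuousWithinAt
    have H := constant_of_has_deriv_right_zero hcont
      (fun x hx => (hder x (Set.Ico_subset_Icc_self hx)).hasDerivWithinAt)
    intro x hx
    have := H x hx
    simp only [hbc0, hbc1, mul_zero, sub_zero, add_zero, zero_add] at this
    linarith
  -- the conserved quantity φ = k u cosh(k·) - u' sinh(k·) is constant (= 0)
  have hcosh : ∀ x : ℝ, HasDerivAt (fun y => Real.cosh (k * y)) (k * Real.sinh (k * x)) x := by
    intro x
    have h := (Real.hasDerivAt_cosh (k * x)).comp x ((hasDerivAt_id x).const_mul k)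
    simpa [mul_comm, Function.comp_def] using h
  have hsinh : ∀ x : ℝ, HasDerivAt (fun y => Real.sinh (k * y)) (k * Real.cosh (k * x)) x := by
    intro x
    have h := (Real.hasDerivAt_sinh (k * x)).comp x ((hasDerivAt_id x).const_mul k)
    simpa [mul_comm, Function.comp_def] using h
  have hφder : ∀ x ∈ Set.Icc (0:ℝ) L,
      HasDerivAt (fun y => k * ((1 - ρ) * v₀ y - ρ * v₁ y) * Real.cosh (k * y)
        - ((1 - ρ) * deriv v₀ y - ρ * deriv v₁ y) * Real.sinh (k * y)) 0 x := by
    intro x hx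
    have h1 : HasDerivAt (fun y => k * ((1 - ρ) * v₀ y - ρ * v₁ y) * Real.cosh (k * y))
        (k * ((1 - ρ) * deriv v₀ x - ρ * deriv v₁ x) * Real.cosh (k * x)
          + k * ((1 - ρ) * v₀ x - ρ * v₁ x) * (k * Real.sinh (k * x))) x :=
      (((hud x (hIcc hx)).const_mul k)).mul (hcosh x)
    have h2 : HasDerivAt (fun y => ((1 - ρ) * deriv v₀ y - ρ * deriv v₁ y) * Real.sinh (k * y))
        (k * k * ((1 - ρ) * v₀ x - ρ * v₁ x) * Real.sinh (k * x)
          + ((1 - ρ) * deriv v₀ x - ρ * deriv v₁ x) * (k * Real.cosh (k * x))) x :=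
      (hu'd x hx).mul (hsinh x)
    have h := h1.sub h2
    have hval : k * ((1 - ρ) * deriv v₀ x - ρ * deriv v₁ x) * Real.cosh (k * x)
          + k * ((1 - ρ) * v₀ x - ρ * v₁ x) * (k * Real.sinh (k * x))
        - (k * k * ((1 - ρ) * v₀ x - ρ * v₁ x) * Real.sinh (k * x)
          + ((1 - ρ) * deriv v₀ x - ρ * deriv v₁ x) * (k * Real.cosh (k * x))) = 0 := by
      ring
    rw [hval] at h
    exact h
  have hφ : ∀ x ∈ Set.Icc (0:ℝ) L,
      k * ((1 - ρ) * v₀ x - ρ * v₁ x) * Real.cosh (k * x)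
        - ((1 - ρ) * deriv v₀ x - ρ * deriv v₁ x) * Real.sinh (k * x) = 0 := by
    have hcont : ContinuousOn (fun y => k * ((1 - ρ) * v₀ y - ρ * v₁ y) * Real.cosh (k * y)
        - ((1 - ρ) * deriv v₀ y - ρ * deriv v₁ y) * Real.sinh (k * y)) (Set.Icc (0:ℝ) L) :=
      fun x hx => ((hφder x hx).differentiableAt.continuousAt).continuousWithinAt
    have H := constant_of_has_deriv_right_zero hcont
      (fun x hx => (hφder x (Set.Ico_subset_Icc_self hx)).hasDerivWithinAt)
    intro x hx
    have := H x hx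
    simpa [hbc0, hbc1] using this
  -- evaluate at L and conclude
  have hφL := hφ L hLmem
  have h2 := hslin L hLmem
  have h3 := hs'const L hLmem
  linear_combination (-1) * hφL + (k * Real.cosh (k * L)) * hbc3
    + (-(k * Real.cosh (k * L) * ρ)) * h2
    + (-(Real.sinh (k * L) * (1 - ρ))) * h3 + Real.sinh (k * L) * hbc2

set_option maxHeartbeats 1000000 in
/-- The steady-state mean oxygen flux of the insect-respiration model is
strictly increasing in the total switching rate. -/
theorem insect_flux_strict_mono
    (L D c ρ : ℝ) (hL : 0 < L) (hD : 0 < D) (hc : 0 < c) (hρ : ρ ∈ Set.Ioo (0:ℝ) 1)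
    (r₁ r₂ : ℝ) (hr₁ : 0 < r₁) (hr₁₂ : r₁ < r₂)
    (v₀ v₁ w₀ w₁ : ℝ → ℝ)
    (a b : ℝ) (ha : a < 0) (hb : L < b)
    (hregv0 : ContDiffOn ℝ 2 v₀ (Set.Ioo a b))
    (hregv1 : ContDiffOn ℝ 2 v₁ (Set.Ioo a b))
    (hregw0 : ContDiffOn ℝ 2 w₀ (Set.Ioo a b))
    (hregw1 : ContDiffOn ℝ 2 w₁ (Set.Ioo a b))
    (hodev0 : ∀ x ∈ Set.Icc (0:ℝ) L,
      D * deriv (deriv v₀) x = (1 - ρ) * r₁ * v₀ x - ρ * r₁ * v₁ x)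
    (hodev1 : ∀ x ∈ Set.Icc (0:ℝ) L,
      D * deriv (deriv v₁) x = ρ * r₁ * v₁ x - (1 - ρ) * r₁ * v₀ x)
    (hodew0 : ∀ x ∈ Set.Icc (0:ℝ) L,
      D * deriv (deriv w₀) x = (1 - ρ) * r₂ * w₀ x - ρ * r₂ * w₁ x)
    (hodew1 : ∀ x ∈ Set.Icc (0:ℝ) L,
      D * deriv (deriv w₁) x = ρ * r₂ * w₁ x - (1 - ρ) * r₂ * w₀ x)
    (hbcv0 : v₀ 0 = 0) (hbcv1 : v₁ 0 = 0)
    (hbcv2 : deriv v₁ L = 0) (hbcv3 : v₀ L = ρ * c)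
    (hbcw0 : w₀ 0 = 0) (hbcw1 : w₁ 0 = 0)
    (hbcw2 : deriv w₁ L = 0) (hbcw3 : w₀ L = ρ * c) :
    D * (deriv v₀ 0 + deriv v₁ 0) < D * (deriv w₀ 0 + deriv w₁ 0) := by
  obtain ⟨hρ0, hρ1⟩ := hρ
  have hr₂ : 0 < r₂ := hr₁.trans hr₁₂
  set k₁ := Real.sqrt (r₁ / D) with hk₁def
  set k₂ := Real.sqrt (r₂ / D) with hk₂def
  have hk₁ : 0 < k₁ := Real.sqrt_pos.mpr (div_pos hr₁ hD)
  have hk₂ : 0 < k₂ := Real.sqrt_pos.mpr (div_pos hr₂ hD)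
  have hkr₁ : D * (k₁ * k₁) = r₁ := by
    rw [hk₁def, Real.mul_self_sqrt (div_pos hr₁ hD).le]
    field_simp
  have hkr₂ : D * (k₂ * k₂) = r₂ := by
    rw [hk₂def, Real.mul_self_sqrt (div_pos hr₂ hD).le]
    field_simp
  have hk₁₂ : k₁ < k₂ := by
    rw [hk₁def, hk₂def]
    apply Real.sqrt_lt_sqrt (div_pos hr₁ hD).le
    exact div_lt_div_of_pos_right hr₁₂ hD
  have E₁ := insect_flux_eq L D c ρ r₁ k₁ hL hD ⟨hρ0, hρ1⟩ hk₁ hkr₁ v₀ v₁ a b ha hb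
    hregv0 hregv1 hodev0 hodev1 hbcv0 hbcv1 hbcv2 hbcv3
  have E₂ := insect_flux_eq L D c ρ r₂ k₂ hL hD ⟨hρ0, hρ1⟩ hk₂ hkr₂ w₀ w₁ a b ha hb
    hregw0 hregw1 hodew0 hodew1 hbcw0 hbcw1 hbcw2 hbcw3
  set S₁ := Real.sinh (k₁ * L)
  set C₁ := Real.cosh (k₁ * L)
  set S₂ := Real.sinh (k₂ * L)
  set C₂ := Real.cosh (k₂ * L)
  have hS₁ : 0 < S₁ := Real.sinh_pos_iff.mpr (mul_pos hk₁ hL)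
  have hS₂ : 0 < S₂ := Real.sinh_pos_iff.mpr (mul_pos hk₂ hL)
  have hC₁ : 0 < C₁ := Real.cosh_pos _
  have hC₂ : 0 < C₂ := Real.cosh_pos _
  have h1ρ : (0:ℝ) < 1 - ρ := by linarith
  have hΔ₁ : 0 < ρ * L * (k₁ * C₁) + (1 - ρ) * S₁ :=
    add_pos (mul_pos (mul_pos hρ0 hL) (mul_pos hk₁ hC₁)) (mul_pos h1ρ hS₁)
  have hΔ₂ : 0 < ρ * L * (k₂ * C₂) + (1 - ρ) * S₂ :=
    add_pos (mul_pos (mul_pos hρ0 hL) (mul_pos hk₂ hC₂)) (mul_pos h1ρ hS₂)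
  -- key inequality: k₁ C₁ S₂ < k₂ C₂ S₁
  have hkey : k₁ * C₁ * S₂ < k₂ * C₂ * S₁ := by
    have h1 : k₁ * L ∈ Set.Ioi (0:ℝ) := mul_pos hk₁ hL
    have h2 : k₂ * L ∈ Set.Ioi (0:ℝ) := mul_pos hk₂ hL
    have h3 : k₁ * L < k₂ * L := by
      exact mul_lt_mul_of_pos_right hk₁₂ hL
    have h := sinh_div_mul_cosh_strictAnti h1 h2 h3
    simp only at h
    rw [div_lt_div_iff₀ (by positivity) (by positivity)] at h
    have h' : k₁ * C₁ * S₂ * L < k₂ * C₂ * S₁ * L := by nlinarith [h]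
    exact lt_of_mul_lt_mul_right h' hL.le
  -- conclude m₁ < m₂
  have hm : deriv v₀ 0 + deriv v₁ 0 < deriv w₀ 0 + deriv w₁ 0 := by
    have hcross : (deriv v₀ 0 + deriv v₁ 0) *
        ((ρ * L * (k₁ * C₁) + (1 - ρ) * S₁) * (ρ * L * (k₂ * C₂) + (1 - ρ) * S₂))
        < (deriv w₀ 0 + deriv w₁ 0) *
        ((ρ * L * (k₁ * C₁) + (1 - ρ) * S₁) * (ρ * L * (k₂ * C₂) + (1 - ρ) * S₂)) := by
      have lhs_eq : (deriv v₀ 0 + deriv v₁ 0) *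
          ((ρ * L * (k₁ * C₁) + (1 - ρ) * S₁) * (ρ * L * (k₂ * C₂) + (1 - ρ) * S₂))
          = ρ * c * (k₁ * C₁) * (ρ * L * (k₂ * C₂) + (1 - ρ) * S₂) := by
        linear_combination (ρ * L * (k₂ * C₂) + (1 - ρ) * S₂) * E₁
      have rhs_eq : (deriv w₀ 0 + deriv w₁ 0) *
          ((ρ * L * (k₁ * C₁) + (1 - ρ) * S₁) * (ρ * L * (k₂ * C₂) + (1 - ρ) * S₂))
          = ρ * c * (k₂ * C₂) * (ρ * L * (k₁ * C₁) + (1 - ρ) * S₁) := by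
        linear_combination (ρ * L * (k₁ * C₁) + (1 - ρ) * S₁) * E₂
      rw [lhs_eq, rhs_eq]
      have hρc : 0 < ρ * c := mul_pos hρ0 hc
      have hstep : (1 - ρ) * (k₁ * C₁ * S₂) < (1 - ρ) * (k₂ * C₂ * S₁) :=
        mul_lt_mul_of_pos_left hkey h1ρ
      nlinarith [mul_lt_mul_of_pos_left hstep hρc]
    exact lt_of_mul_lt_mul_right hcross (by positivity)
  exact mul_lt_mul_of_pos_left hm hD
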